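/- For every i ∈ [t], j ∈ [n_i], and s ∈ [m_i], the r-th generalized sum-rank weight of the full space 𝕄, for r = Σ_{l=1}^{i−1} m_l n_l + (j−1) m_i + s, equals n_1 + ... + n_{i−1} + j. Consequently, a sequence of integers is a subsequence of the sequence (d_1(𝕄), ..., d_{dim 𝕄}(𝕄)) if and only if it is a non-decreasing sequence of elements of [n_1 + ... + n_t] in which, for every i ∈ [t] and j ∈ [n_i], the integer n_1 + ... + n_{i−1} + j appears at most m_i times. -/

import Mathlib

open Module

section MatAux
variable {F : Type*} [Field F]

/-- Rectangular "identity-like" matrix. -/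
def ematG (F : Type*) [Field F] (a b : ℕ) : Matrix (Fin a) (Fin b) F :=
  Matrix.of fun r c => if (r : ℕ) = (c : ℕ) then 1 else 0

/-- Matrix with 1's on the diagonal in the first `j` columns. -/
def jmatG (F : Type*) [Field F] (a b j : ℕ) : Matrix (Fin a) (Fin b) F :=
  Matrix.of fun r c => if (r : ℕ) = (c : ℕ) ∧ (c : ℕ) < j then 1 else 0

lemma emat_mul_emat (a b j : ℕ) : ematG F a j * ematG F j b = jmatG F a b j := by
  ext r c
  simp only [Matrix.mul_apply, ematG, jmatG, Matrix.of_apply]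
  by_cases h : (c : ℕ) < j
  · rw [Finset.sum_eq_single (⟨(c : ℕ), h⟩ : Fin j)]
    · simp [h]
    · intro k _ hk
      have : (k : ℕ) ≠ (c : ℕ) := fun hkc => hk (by ext; simpa using hkc)
      simp [this]
    · simp
  · rw [Finset.sum_eq_zero, if_neg (by tauto)]
    intro k _
    have : (k : ℕ) ≠ (c : ℕ) := by omega
    simp [this]

lemma jmat_eq_one (j a : ℕ) (hja : j ≤ a) : jmatG F j j a = 1 := by
  ext r c
  simp only [jmatG, Matrix.of_apply, Matrix.one_apply, Fin.ext_iff]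
  have : (c : ℕ) < a := lt_of_lt_of_le c.2 hja
  simp [this]

lemma rank_jmat (a b j : ℕ) (hja : j ≤ a) (hjb : j ≤ b) :
    (jmatG F a b j).rank = j := by
  refine le_antisymm ?_ ?_
  · rw [← emat_mul_emat]
    exact (Matrix.rank_mul_le_right _ _).trans
      ((Matrix.rank_le_card_height _).trans (by simp))
  · have hjm : jmatG F a b j * ematG F b j = ematG F a j := by
      ext r c
      simp only [Matrix.mul_apply, ematG, jmatG, Matrix.of_apply]
      have hc : (c : ℕ) < b := lt_of_lt_of_le c.2 hjb
      rw [Finset.sum_eq_single (⟨(c : ℕ), hc⟩ : Fin b)]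
      · have : (c : ℕ) < j := c.2
        simp [this]
      · intro k _ hk
        have : (k : ℕ) ≠ (c : ℕ) := fun hkc => hk (by ext; simpa using hkc)
        simp [this]
      · simp
    have h1 : ematG F j a * (jmatG F a b j * ematG F b j) = 1 := by
      rw [hjm, emat_mul_emat j j a, jmat_eq_one j a hja]
    calc j = (1 : Matrix (Fin j) (Fin j) F).rank := by simp
    _ ≤ (jmatG F a b j).rank := by
        rw [← h1]
        exact (Matrix.rank_mul_le_right _ _).trans (Matrix.rank_mul_le_left _ _)

/-- Matrices supported on the first `j` columns. -/
def colSupp (F : Type*) [Field F] (a b j : ℕ) : Submodule F (Matrix (Fin a) (Fin b) F) where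
  carrier := {A | ∀ (r : Fin a) (c : Fin b), j ≤ (c : ℕ) → A r c = 0}
  add_mem' := by
    intro x y hx hy
    intro r c hc
    simp [Matrix.add_apply, hx r c hc, hy r c hc]
  zero_mem' := by intro r c hc; rfl
  smul_mem' := by
    intro s x hx r c hc
    simp [Matrix.smul_apply, hx r c hc]

lemma mem_colSupp {a b j : ℕ} {A : Matrix (Fin a) (Fin b) F} :
    A ∈ colSupp F a b j ↔ ∀ (r : Fin a) (c : Fin b), j ≤ (c : ℕ) → A r c = 0 := Iff.rfl

lemma jmat_mem_colSupp {a b j : ℕ} : jmatG F a b j ∈ colSupp F a b j := by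
  intro r c hc
  simp only [jmatG, Matrix.of_apply]
  rw [if_neg (by omega)]

lemma colSupp_eq_top {a b : ℕ} : colSupp F a b b = ⊤ := by
  rw [eq_top_iff]
  intro A _ r c hc
  exact absurd c.2 (by omega)

lemma rank_le_of_mem_colSupp {a b j : ℕ} {A : Matrix (Fin a) (Fin b) F}
    (hA : A ∈ colSupp F a b j) : A.rank ≤ j := by
  have key : A * (ematG F b j * ematG F j b) = A := by
    rw [emat_mul_emat b b j]
    ext r c
    simp only [Matrix.mul_apply, jmatG, Matrix.of_apply]
    by_cases h : (c : ℕ) < j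
    · rw [Finset.sum_eq_single c]
      · simp [h]
      · intro k _ hk
        have : (k : ℕ) ≠ (c : ℕ) := fun hkc => hk (by ext; simpa using hkc)
        simp [this]
      · simp
    · rw [hA r c (by omega)]
      exact Finset.sum_eq_zero fun k _ => by rw [if_neg (by omega), mul_zero]
  calc A.rank = (A * ematG F b j * ematG F j b).rank := by
        rw [Matrix.mul_assoc, key]
  _ ≤ (ematG F j b).rank := Matrix.rank_mul_le_right _ _
  _ ≤ j := (Matrix.rank_le_card_height _).trans (by simp)

/-- `colSupp F a b j` is linearly equivalent to the space of `a × j` matrices. -/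
def colSuppEquiv (a b j : ℕ) (hj : j ≤ b) :
    (colSupp F a b j) ≃ₗ[F] Matrix (Fin a) (Fin j) F where
  toFun x := Matrix.of fun r c => x.1 r (Fin.castLE hj c)
  map_add' x y := by ext r c; simp [Matrix.add_apply]
  map_smul' s x := by ext r c; simp [Matrix.smul_apply]
  invFun B := ⟨Matrix.of fun r c => if h : (c : ℕ) < j then B r ⟨c, h⟩ else 0, by
    intro r c hc
    simp only [Matrix.of_apply]
    rw [dif_neg (by omega)]⟩
  left_inv x := by
    apply Subtype.ext
    ext r c
    simp only [Matrix.of_apply]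
    by_cases h : (c : ℕ) < j
    · rw [dif_pos h]
      have hc : Fin.castLE hj ⟨(c : ℕ), h⟩ = c := by ext; simp
      rw [hc]
    · rw [dif_neg h]
      exact (x.2 r c (by omega)).symm
  right_inv B := by
    ext r c
    simp only [Matrix.of_apply]
    rw [dif_pos (by simpa using c.2)]
    exact congrArg _ (Fin.ext (by simp))

lemma finrank_colSupp (a b j : ℕ) (hj : j ≤ b) :
    finrank F (colSupp F a b j) = a * j := by
  rw [(colSuppEquiv a b j hj).finrank_eq]
  simp [Module.finrank_matrix]

end MatAux


open Module

variable {F : Type*} [Field F] [Fintype F] {t : ℕ} {m n : Fin t → ℕ}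

/-- The sum-rank weight of an element of `𝕄 = F^{m 0 × n 0} × ⋯ × F^{m (t-1) × n (t-1)}`. -/
noncomputable def srk (C : ∀ i : Fin t, Matrix (Fin (m i)) (Fin (n i)) F) : ℕ :=
  ∑ i, (C i).rank

/-- The maximum sum-rank of a code. -/
noncomputable def maxsrk (𝒞 : Submodule F (∀ i : Fin t, Matrix (Fin (m i)) (Fin (n i)) F)) : ℕ :=
  sSup {w | ∃ C ∈ 𝒞, srk C = w}

/-- The minimum distance of a code. -/
noncomputable def minDist (𝒞 : Submodule F (∀ i : Fin t, Matrix (Fin (m i)) (Fin (n i)) F)) : ℕ :=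
  sInf {w | ∃ C ∈ 𝒞, C ≠ 0 ∧ srk C = w}

/-- The maximum rank of a subspace of a matrix space. -/
noncomputable def maxrank {a b : ℕ} (𝒜 : Submodule F (Matrix (Fin a) (Fin b) F)) : ℕ :=
  sSup {w | ∃ A ∈ 𝒜, A.rank = w}

/-- Optimal anticodes in a single matrix space. -/
def IsOptAnticode {a b : ℕ} (𝒜 : Submodule F (Matrix (Fin a) (Fin b) F)) : Prop :=
  Module.finrank F 𝒜 = a * maxrank 𝒜

/-- The weight of a sum-rank metric code: the minimum of `maxsrk` over products of
optimal anticodes containing it. -/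
noncomputable def codeWt (𝒞 : Submodule F (∀ i : Fin t, Matrix (Fin (m i)) (Fin (n i)) F)) : ℕ :=
  sInf {w | ∃ 𝒜 : ∀ i : Fin t, Submodule F (Matrix (Fin (m i)) (Fin (n i)) F),
    (∀ i, IsOptAnticode (𝒜 i)) ∧ 𝒞 ≤ Submodule.pi Set.univ 𝒜 ∧
      maxsrk (Submodule.pi Set.univ 𝒜) = w}

/-- The `r`-th generalized sum-rank weight of a code. -/
noncomputable def gw (𝒞 : Submodule F (∀ i : Fin t, Matrix (Fin (m i)) (Fin (n i)) F))
    (r : ℕ) : ℕ :=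
  sInf {w | ∃ 𝒟 : Submodule F (∀ i : Fin t, Matrix (Fin (m i)) (Fin (n i)) F),
    𝒟 ≤ 𝒞 ∧ r ≤ Module.finrank F 𝒟 ∧ codeWt 𝒟 = w}

/-- `d` is a subsequence of `e`. -/
def IsSubseq {k K : ℕ} (d : Fin k → ℕ) (e : Fin K → ℕ) : Prop :=
  ∃ φ : Fin k → Fin K, StrictMono φ ∧ ∀ r, d r = e (φ r)


section MaxrankAux
variable {a b : ℕ} {𝒜 : Submodule F (Matrix (Fin a) (Fin b) F)}

lemma maxrank_set_nonempty (𝒜 : Submodule F (Matrix (Fin a) (Fin b) F)) :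
    {w | ∃ A ∈ 𝒜, A.rank = w}.Nonempty :=
  ⟨0, 0, zero_mem _, Matrix.rank_zero⟩

lemma maxrank_set_bdd (𝒜 : Submodule F (Matrix (Fin a) (Fin b) F)) :
    BddAbove {w | ∃ A ∈ 𝒜, A.rank = w} := by
  refine ⟨b, ?_⟩
  rintro w ⟨A, -, rfl⟩
  exact A.rank_le_width

lemma le_maxrank {A : Matrix (Fin a) (Fin b) F} (h : A ∈ 𝒜) : A.rank ≤ maxrank 𝒜 :=
  le_csSup (maxrank_set_bdd 𝒜) ⟨A, h, rfl⟩

lemma maxrank_le {k : ℕ} (h : ∀ A ∈ 𝒜, A.rank ≤ k) : maxrank 𝒜 ≤ k := by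
  refine csSup_le (maxrank_set_nonempty 𝒜) ?_
  rintro w ⟨A, hA, rfl⟩
  exact h A hA

lemma exists_rank_eq_maxrank (𝒜 : Submodule F (Matrix (Fin a) (Fin b) F)) :
    ∃ A ∈ 𝒜, A.rank = maxrank 𝒜 :=
  Nat.sSup_mem (maxrank_set_nonempty 𝒜) (maxrank_set_bdd 𝒜)

lemma maxrank_le_width (𝒜 : Submodule F (Matrix (Fin a) (Fin b) F)) : maxrank 𝒜 ≤ b :=
  maxrank_le fun A _ => A.rank_le_width

lemma maxrank_colSupp {j : ℕ} (hja : j ≤ a) (hjb : j ≤ b) :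
    maxrank (colSupp F a b j) = j := by
  refine le_antisymm (maxrank_le fun A hA => rank_le_of_mem_colSupp hA) ?_
  have h := le_maxrank (𝒜 := colSupp F a b j) jmat_mem_colSupp
  rwa [rank_jmat a b j hja hjb] at h

lemma isOptAnticode_colSupp {j : ℕ} (hja : j ≤ a) (hjb : j ≤ b) :
    IsOptAnticode (colSupp F a b j) := by
  rw [IsOptAnticode, maxrank_colSupp hja hjb, finrank_colSupp a b j hjb]

end MaxrankAux

section PiAux

/-- `Submodule.pi Set.univ p` is equivalent to the product of the `p i`. -/
def piSubEquiv {ι : Type*} {M : ι → Type*} [∀ i, AddCommGroup (M i)]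
    [∀ i, Module F (M i)] (p : ∀ i, Submodule F (M i)) :
    (Submodule.pi Set.univ p) ≃ₗ[F] ∀ i, p i where
  toFun x := fun i => ⟨x.1 i, x.2 i (Set.mem_univ i)⟩
  map_add' x y := rfl
  map_smul' s x := rfl
  invFun y := ⟨fun i => (y i).1, fun i _ => (y i).2⟩
  left_inv x := rfl
  right_inv y := rfl

lemma finrank_pi_submodule (𝒜 : ∀ i : Fin t, Submodule F (Matrix (Fin (m i)) (Fin (n i)) F)) :
    finrank F (Submodule.pi Set.univ 𝒜) = ∑ i, finrank F (𝒜 i) :=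
  (piSubEquiv 𝒜).finrank_eq.trans (Module.finrank_pi_fintype F)

lemma srk_zero : srk (0 : ∀ i : Fin t, Matrix (Fin (m i)) (Fin (n i)) F) = 0 := by
  simp [srk]

lemma maxsrk_pi (𝒜 : ∀ i : Fin t, Submodule F (Matrix (Fin (m i)) (Fin (n i)) F)) :
    maxsrk (Submodule.pi Set.univ 𝒜) = ∑ i, maxrank (𝒜 i) := by
  refine le_antisymm ?_ ?_
  · refine csSup_le ⟨0, 0, zero_mem _, srk_zero⟩ ?_
    rintro w ⟨C, hC, rfl⟩
    exact Finset.sum_le_sum fun i _ => le_maxrank (Submodule.mem_pi.1 hC i (Set.mem_univ i))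
  · choose A hA hrk using fun i => exists_rank_eq_maxrank (𝒜 i)
    have hbdd : BddAbove {w | ∃ C ∈ Submodule.pi Set.univ 𝒜, srk C = w} := by
      refine ⟨∑ i, n i, ?_⟩
      rintro w ⟨C, -, rfl⟩
      exact Finset.sum_le_sum fun i _ => (C i).rank_le_width
    refine le_csSup hbdd ⟨fun i => A i, Submodule.mem_pi.2 fun i _ => hA i, ?_⟩
    simp only [srk]
    exact Finset.sum_congr rfl fun i _ => hrk i

lemma finrank_ambient_eq :
    finrank F (∀ i : Fin t, Matrix (Fin (m i)) (Fin (n i)) F) = ∑ i, m i * n i := by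
  rw [Module.finrank_pi_fintype F]
  exact Finset.sum_congr rfl fun i _ => by simp [Module.finrank_matrix]

end PiAux

section Part1

lemma sum_split (i : Fin t) (g : Fin t → ℕ) :
    ∑ l, g l = (∑ l ∈ Finset.Iio i, g l) + g i + ∑ l ∈ Finset.Ioi i, g l := by
  have d1 : Disjoint (Finset.Iio i) ({i} : Finset (Fin t)) := by
    rw [Finset.disjoint_left]
    intro l hl hl'
    rw [Finset.mem_singleton] at hl'
    exact absurd (Finset.mem_Iio.1 hl) (hl' ▸ lt_irrefl _)
  have d2 : Disjoint (Finset.Iio i ∪ {i}) (Finset.Ioi i) := by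
    rw [Finset.disjoint_left]
    intro l hl hl'
    rw [Finset.mem_union, Finset.mem_Iio, Finset.mem_singleton] at hl
    rw [Finset.mem_Ioi] at hl'
    rcases hl with h | h
    · exact absurd (h.trans hl') (lt_irrefl _)
    · exact absurd hl' (h ▸ lt_irrefl _)
  have hU : Finset.Iio i ∪ {i} ∪ Finset.Ioi i = Finset.univ := by
    ext l
    simp only [Finset.mem_union, Finset.mem_Iio, Finset.mem_singleton, Finset.mem_Ioi,
      Finset.mem_univ, iff_true]
    rcases lt_trichotomy l i with h | h | h
    · exact Or.inl (Or.inl h)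
    · exact Or.inl (Or.inr h)
    · exact Or.inr h
  rw [← hU, Finset.sum_union d2, Finset.sum_union d1, Finset.sum_singleton]

lemma ip_lemma (hm_mono : ∀ i j : Fin t, i ≤ j → m j ≤ m i)
    (i : Fin t) (j s : ℕ) (hj1 : 1 ≤ j) (hs1 : 1 ≤ s)
    (r : Fin t → ℕ) (hr : ∀ l, r l ≤ n l)
    (hsum : ∑ l ∈ Finset.Iio i, m l * n l + (j - 1) * m i + s ≤ ∑ l, m l * r l) :
    ∑ l ∈ Finset.Iio i, n l + j ≤ ∑ l, r l := by
  by_contra hcon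
  push_neg at hcon
  have hji : ∑ l, r l ≤ (∑ l ∈ Finset.Iio i, n l) + (j - 1) := by omega
  have hsplit := sum_split i (fun l => m l * r l)
  have hA : ∑ l ∈ Finset.Iio i, m l * r l
      = (∑ l ∈ Finset.Iio i, (m l - m i) * r l) + ∑ l ∈ Finset.Iio i, m i * r l := by
    rw [← Finset.sum_add_distrib]
    refine Finset.sum_congr rfl fun l hl => ?_
    have h2 : m i ≤ m l := hm_mono l i (le_of_lt (Finset.mem_Iio.1 hl))
    rw [← Nat.add_mul, Nat.sub_add_cancel h2]
  have hB : ∑ l ∈ Finset.Ioi i, m l * r l ≤ ∑ l ∈ Finset.Ioi i, m i * r l :=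
    Finset.sum_le_sum fun l hl =>
      Nat.mul_le_mul_right _ (hm_mono i l (le_of_lt (Finset.mem_Ioi.1 hl)))
  have hC : (∑ l ∈ Finset.Iio i, (m l - m i) * r l) ≤ ∑ l ∈ Finset.Iio i, (m l - m i) * n l :=
    Finset.sum_le_sum fun l _ => Nat.mul_le_mul_left _ (hr l)
  have hD : (∑ l ∈ Finset.Iio i, (m l - m i) * n l) + ∑ l ∈ Finset.Iio i, m i * n l
      = ∑ l ∈ Finset.Iio i, m l * n l := by
    rw [← Finset.sum_add_distrib]
    refine Finset.sum_congr rfl fun l hl => ?_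
    have h2 : m i ≤ m l := hm_mono l i (le_of_lt (Finset.mem_Iio.1 hl))
    rw [← Nat.add_mul, Nat.sub_add_cancel h2]
  have hE : m i * ∑ l, r l
      = (∑ l ∈ Finset.Iio i, m i * r l) + m i * r i + ∑ l ∈ Finset.Ioi i, m i * r l := by
    rw [sum_split i r, Nat.mul_add, Nat.mul_add, Finset.mul_sum, Finset.mul_sum]
  have hF : m i * ∑ l, r l ≤ m i * ((∑ l ∈ Finset.Iio i, n l) + (j - 1)) :=
    Nat.mul_le_mul_left _ hji
  have hG : m i * ((∑ l ∈ Finset.Iio i, n l) + (j - 1))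
      = (∑ l ∈ Finset.Iio i, m i * n l) + m i * (j - 1) := by
    rw [Nat.mul_add, Finset.mul_sum]
  have hcomm : (j - 1) * m i = m i * (j - 1) := Nat.mul_comm _ _
  linarith [hsum, hsplit, hA, hB, hC, hD, hE, hF, hG, hs1]

lemma codeWt_lower (hm_mono : ∀ i j : Fin t, i ≤ j → m j ≤ m i) (hmn : ∀ i, n i ≤ m i)
    (i : Fin t) (j s : ℕ) (hj1 : 1 ≤ j) (hs1 : 1 ≤ s)
    (𝒟 : Submodule F (∀ i : Fin t, Matrix (Fin (m i)) (Fin (n i)) F))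
    (hdim : ∑ l ∈ Finset.Iio i, m l * n l + (j - 1) * m i + s ≤ finrank F 𝒟) :
    ∑ l ∈ Finset.Iio i, n l + j ≤ codeWt 𝒟 := by
  refine le_csInf ?_ ?_
  · have hT : Submodule.pi Set.univ (fun l : Fin t => colSupp F (m l) (n l) (n l)) = ⊤ := by
      have he : (fun l : Fin t => colSupp F (m l) (n l) (n l))
          = fun l : Fin t => (⊤ : Submodule F (Matrix (Fin (m l)) (Fin (n l)) F)) :=
        funext fun l => colSupp_eq_top
      rw [he, Submodule.pi_top]
    exact ⟨maxsrk (Submodule.pi Set.univ fun l : Fin t => colSupp F (m l) (n l) (n l)),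
      fun l => colSupp F (m l) (n l) (n l), fun l => isOptAnticode_colSupp (hmn l) le_rfl,
      hT ▸ le_top, rfl⟩
  · rintro w ⟨𝒜, hopt, hle, rfl⟩
    rw [maxsrk_pi]
    refine ip_lemma hm_mono i j s hj1 hs1 (fun l => maxrank (𝒜 l))
      (fun l => maxrank_le_width (𝒜 l)) ?_
    calc ∑ l ∈ Finset.Iio i, m l * n l + (j - 1) * m i + s ≤ finrank F 𝒟 := hdim
    _ ≤ finrank F (Submodule.pi Set.univ 𝒜) := Submodule.finrank_mono hle
    _ = ∑ l, finrank F (𝒜 l) := finrank_pi_submodule 𝒜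
    _ = ∑ l, m l * maxrank (𝒜 l) := Finset.sum_congr rfl fun l _ => hopt l

end Part1

section Part1Main

lemma gw_top_eq (hm_mono : ∀ i j : Fin t, i ≤ j → m j ≤ m i) (hmn : ∀ i, n i ≤ m i)
    (i : Fin t) (j s : ℕ) (hj1 : 1 ≤ j) (hj2 : j ≤ n i) (hs1 : 1 ≤ s) (hs2 : s ≤ m i) :
    gw (⊤ : Submodule F (∀ i : Fin t, Matrix (Fin (m i)) (Fin (n i)) F))
      (∑ l ∈ Finset.Iio i, m l * n l + (j - 1) * m i + s) = ∑ l ∈ Finset.Iio i, n l + j := by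
  have hval : ∀ l : Fin t, (if l < i then n l else if l = i then j else 0) ≤ n l := by
    intro l
    split_ifs with h1 h2
    · exact le_rfl
    · exact h2 ▸ hj2
    · exact Nat.zero_le _
  set 𝒜0 : ∀ l : Fin t, Submodule F (Matrix (Fin (m l)) (Fin (n l)) F) :=
    fun l => colSupp F (m l) (n l) (if l < i then n l else if l = i then j else 0) with h𝒜0
  have hopt : ∀ l, IsOptAnticode (𝒜0 l) := fun l =>
    isOptAnticode_colSupp ((hval l).trans (hmn l)) (hval l)
  have hrank0 : finrank F (Submodule.pi Set.univ 𝒜0)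
      = ∑ l ∈ Finset.Iio i, m l * n l + m i * j := by
    rw [finrank_pi_submodule]
    have hfr : ∀ l, finrank F (𝒜0 l)
        = m l * (if l < i then n l else if l = i then j else 0) :=
      fun l => finrank_colSupp _ _ _ (hval l)
    rw [Finset.sum_congr rfl fun l _ => hfr l, sum_split i]
    have e1 : ∑ l ∈ Finset.Iio i, m l * (if l < i then n l else if l = i then j else 0)
        = ∑ l ∈ Finset.Iio i, m l * n l :=
      Finset.sum_congr rfl fun l hl => by rw [if_pos (Finset.mem_Iio.1 hl)]
    have e2 : m i * (if i < i then n i else if i = i then j else 0) = m i * j := by simp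
    have e3 : ∑ l ∈ Finset.Ioi i, m l * (if l < i then n l else if l = i then j else 0) = 0 :=
      Finset.sum_eq_zero fun l hl => by
        have h := Finset.mem_Ioi.1 hl
        rw [if_neg (lt_asymm h), if_neg (ne_of_gt h), Nat.mul_zero]
    rw [e1, e2, e3, Nat.add_zero]
  have hmax0 : maxsrk (Submodule.pi Set.univ 𝒜0) = ∑ l ∈ Finset.Iio i, n l + j := by
    rw [maxsrk_pi]
    have hmr : ∀ l, maxrank (𝒜0 l) = (if l < i then n l else if l = i then j else 0) :=
      fun l => maxrank_colSupp ((hval l).trans (hmn l)) (hval l)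
    rw [Finset.sum_congr rfl fun l _ => hmr l, sum_split i]
    have e1 : ∑ l ∈ Finset.Iio i, (if l < i then n l else if l = i then j else 0)
        = ∑ l ∈ Finset.Iio i, n l :=
      Finset.sum_congr rfl fun l hl => by rw [if_pos (Finset.mem_Iio.1 hl)]
    have e2 : (if i < i then n i else if i = i then j else 0) = j := by simp
    have e3 : ∑ l ∈ Finset.Ioi i, (if l < i then n l else if l = i then j else 0) = 0 :=
      Finset.sum_eq_zero fun l hl => by
        have h := Finset.mem_Ioi.1 hl
        rw [if_neg (lt_asymm h), if_neg (ne_of_gt h)]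
    rw [e1, e2, e3, Nat.add_zero]
  have hrle : ∑ l ∈ Finset.Iio i, m l * n l + (j - 1) * m i + s
      ≤ finrank F (Submodule.pi Set.univ 𝒜0) := by
    rw [hrank0]
    have h1 : (j - 1 + 1) * m i = (j - 1) * m i + 1 * m i := Nat.add_mul _ _ _
    have h2 : j - 1 + 1 = j := Nat.succ_pred_eq_of_pos hj1
    have h3 : m i * j = j * m i := Nat.mul_comm _ _
    have h4 : (j - 1) * m i + m i = j * m i := by
      obtain ⟨jp, rfl⟩ : ∃ jp, j = jp + 1 := ⟨j - 1, by omega⟩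
      simp [Nat.succ_mul]
    omega
  have hlow := codeWt_lower hm_mono hmn i j s hj1 hs1 (Submodule.pi Set.univ 𝒜0) hrle
  have hup : codeWt (Submodule.pi Set.univ 𝒜0) ≤ ∑ l ∈ Finset.Iio i, n l + j :=
    Nat.sInf_le ⟨𝒜0, hopt, le_rfl, hmax0⟩
  have hcw : codeWt (Submodule.pi Set.univ 𝒜0) = ∑ l ∈ Finset.Iio i, n l + j :=
    le_antisymm hup hlow
  refine le_antisymm (Nat.sInf_le ⟨Submodule.pi Set.univ 𝒜0, le_top, hrle, hcw⟩) ?_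
  refine le_csInf ⟨_, Submodule.pi Set.univ 𝒜0, le_top, hrle, hcw⟩ ?_
  rintro w ⟨𝒟, -, hr𝒟, rfl⟩
  exact codeWt_lower hm_mono hmn i j s hj1 hs1 𝒟 hr𝒟

end Part1Main

section Part2

lemma sum_Iic_eq (i : Fin t) (g : Fin t → ℕ) :
    ∑ l ∈ Finset.Iic i, g l = ∑ l ∈ Finset.Iio i, g l + g i := by
  have h : Finset.Iic i = insert i (Finset.Iio i) := by
    ext l
    simp only [Finset.mem_Iic, Finset.mem_insert, Finset.mem_Iio]
    rw [le_iff_lt_or_eq]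
    tauto
  rw [h, Finset.sum_insert (by simp)]
  omega

lemma Iic_subset_Iio {i i' : Fin t} (h : i < i') : Finset.Iic i ⊆ Finset.Iio i' := fun l hl =>
  Finset.mem_Iio.2 (lt_of_le_of_lt (Finset.mem_Iic.1 hl) h)

lemma find_index (f : Fin t → ℕ) (r : ℕ) (h1 : 1 ≤ r) (h2 : r ≤ ∑ l, f l) :
    ∃ i : Fin t, ∑ l ∈ Finset.Iio i, f l < r ∧ r ≤ ∑ l ∈ Finset.Iio i, f l + f i := by
  have ht : 0 < t := by
    by_contra h
    have h0 : t = 0 := by omega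
    subst h0
    rw [Finset.univ_eq_empty, Finset.sum_empty] at h2
    omega
  set P := Finset.univ.filter (fun i : Fin t => r ≤ ∑ l ∈ Finset.Iic i, f l) with hP
  have htop : (⟨t - 1, by omega⟩ : Fin t) ∈ P := by
    rw [hP, Finset.mem_filter]
    refine ⟨Finset.mem_univ _, ?_⟩
    have hIu : Finset.Iic (⟨t - 1, by omega⟩ : Fin t) = Finset.univ := by
      ext l
      simp only [Finset.mem_Iic, Finset.mem_univ, iff_true, Fin.le_def]
      have := l.2
      omega
    rw [hIu]
    exact h2
  have hne : P.Nonempty := ⟨_, htop⟩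
  set i := P.min' hne with hi
  have hiP : i ∈ P := P.min'_mem hne
  rw [hP, Finset.mem_filter] at hiP
  have hIic : ∑ l ∈ Finset.Iic i, f l = ∑ l ∈ Finset.Iio i, f l + f i := sum_Iic_eq i f
  refine ⟨i, ?_, by rw [← hIic]; exact hiP.2⟩
  by_contra hc
  push_neg at hc
  have hi0 : (i : ℕ) ≠ 0 := by
    intro h0
    have hIe : Finset.Iio i = ∅ := by
      ext l
      simp only [Finset.mem_Iio, Finset.notMem_empty, iff_false, Fin.lt_def, h0]
      omega
    rw [hIe, Finset.sum_empty] at hc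
    omega
  have hival : (i : ℕ) < t := i.2
  set i' : Fin t := ⟨(i : ℕ) - 1, by omega⟩ with hi'
  have hlt : i' < i := by
    rw [Fin.lt_def]
    simp only [hi']
    omega
  have hIic' : Finset.Iic i' = Finset.Iio i := by
    ext l
    simp only [Finset.mem_Iic, Finset.mem_Iio, Fin.le_def, Fin.lt_def, hi']
    omega
  have hi'P : i' ∈ P := by
    rw [hP, Finset.mem_filter]
    exact ⟨Finset.mem_univ _, by rw [hIic']; exact hc⟩
  exact absurd (P.min'_le i' hi'P) (not_le.2 hlt)

lemma decomp (hn_pos : ∀ i, 0 < n i) (hmn : ∀ i, n i ≤ m i) (r : ℕ)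
    (h1 : 1 ≤ r) (h2 : r ≤ ∑ l, m l * n l) :
    ∃ (i : Fin t) (j : ℕ), 1 ≤ j ∧ j ≤ n i ∧
      ∑ l ∈ Finset.Iio i, m l * n l + (j - 1) * m i < r ∧
      r ≤ ∑ l ∈ Finset.Iio i, m l * n l + j * m i := by
  obtain ⟨i, hlo, hhi⟩ := find_index (fun l => m l * n l) r h1 h2
  have mpos : 0 < m i := lt_of_lt_of_le (hn_pos i) (hmn i)
  set S := ∑ l ∈ Finset.Iio i, m l * n l with hS
  set r' := r - S with hr'
  have hr1 : 1 ≤ r' := by omega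
  have hr2 : r' ≤ m i * n i := by omega
  obtain ⟨q, hqmul, hqlt, hqn⟩ :
      ∃ q, q * m i ≤ r' - 1 ∧ r' - 1 < (q + 1) * m i ∧ q < n i := by
    refine ⟨(r' - 1) / m i, Nat.div_mul_le_self _ _, ?_, ?_⟩
    · have hdm := Nat.div_add_mod (r' - 1) (m i)
      have hmod : (r' - 1) % m i < m i := Nat.mod_lt _ mpos
      have hc : m i * ((r' - 1) / m i) = ((r' - 1) / m i) * m i := Nat.mul_comm _ _
      have hm1 : ((r' - 1) / m i + 1) * m i = ((r' - 1) / m i) * m i + m i := by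
        rw [Nat.add_mul, Nat.one_mul]
      omega
    · rw [Nat.div_lt_iff_lt_mul mpos]
      have hcomm2 : m i * n i = n i * m i := Nat.mul_comm _ _
      omega
  refine ⟨i, q + 1, by omega, by omega, ?_, ?_⟩
  · simp only [Nat.add_sub_cancel]
    omega
  · omega

/-- `blockL m n i j` : index just before the block of `(i, j)`. -/
def blockL (m n : Fin t → ℕ) (i : Fin t) (j : ℕ) : ℕ :=
  ∑ l ∈ Finset.Iio i, m l * n l + (j - 1) * m i

def blockR (m n : Fin t → ℕ) (i : Fin t) (j : ℕ) : ℕ :=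
  ∑ l ∈ Finset.Iio i, m l * n l + j * m i

def TvP (n : Fin t → ℕ) (i : Fin t) (j : ℕ) : ℕ := ∑ l ∈ Finset.Iio i, n l + j

lemma blockL_le_blockR {i : Fin t} {j : ℕ} : blockL m n i j ≤ blockR m n i j := by
  have : (j - 1) * m i ≤ j * m i := Nat.mul_le_mul_right _ (Nat.sub_le _ _)
  unfold blockL blockR
  omega

lemma blockL_lt_blockR {i : Fin t} {j : ℕ} (hj : 1 ≤ j) (hm : 0 < m i) :
    blockL m n i j < blockR m n i j := by
  obtain ⟨jp, rfl⟩ : ∃ jp, j = jp + 1 := ⟨j - 1, by omega⟩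
  unfold blockL blockR
  simp only [Nat.add_sub_cancel]
  have h1 : (jp + 1) * m i = jp * m i + m i := by rw [Nat.add_mul, Nat.one_mul]
  omega

lemma blockR_sub_blockL {i : Fin t} {j : ℕ} (hj : 1 ≤ j) :
    blockR m n i j = blockL m n i j + m i := by
  obtain ⟨jp, rfl⟩ : ∃ jp, j = jp + 1 := ⟨j - 1, by omega⟩
  unfold blockL blockR
  simp only [Nat.add_sub_cancel]
  have h1 : (jp + 1) * m i = jp * m i + m i := by rw [Nat.add_mul, Nat.one_mul]
  omega

lemma blockR_le_total {i : Fin t} {j : ℕ} (hj : j ≤ n i) :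
    blockR m n i j ≤ ∑ l, m l * n l := by
  have h1 : j * m i ≤ n i * m i := Nat.mul_le_mul_right _ hj
  have h2 : n i * m i = m i * n i := Nat.mul_comm _ _
  have h3 := sum_split i (fun l => m l * n l)
  unfold blockR
  omega

lemma TvP_le_total {i : Fin t} {j : ℕ} (hj : j ≤ n i) : TvP n i j ≤ ∑ l, n l := by
  have h3 := sum_split i n
  unfold TvP
  omega

/-- Strict lexicographic order on pairs. -/
def lexlt (i : Fin t) (j : ℕ) (i' : Fin t) (j' : ℕ) : Prop :=
  i < i' ∨ (i = i' ∧ j < j')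

lemma TvP_lt_of_lexlt {i i' : Fin t} {j j' : ℕ} (hj2 : j ≤ n i) (hj1' : 1 ≤ j')
    (h : lexlt i j i' j') : TvP n i j < TvP n i' j' := by
  rcases h with h | ⟨rfl, h⟩
  · have h1 : TvP n i j ≤ ∑ l ∈ Finset.Iic i, n l := by
      rw [sum_Iic_eq]
      unfold TvP
      omega
    have h2 : ∑ l ∈ Finset.Iic i, n l ≤ ∑ l ∈ Finset.Iio i', n l :=
      Finset.sum_le_sum_of_subset (Iic_subset_Iio h)
    unfold TvP
    unfold TvP at h1
    omega
  · unfold TvP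
    omega

lemma lexlt_trichotomy (i i' : Fin t) (j j' : ℕ) :
    lexlt i j i' j' ∨ (i = i' ∧ j = j') ∨ lexlt i' j' i j := by
  unfold lexlt
  rcases lt_trichotomy i i' with h | h | h
  · exact Or.inl (Or.inl h)
  · rcases lt_trichotomy j j' with h2 | h2 | h2
    · exact Or.inl (Or.inr ⟨h, h2⟩)
    · exact Or.inr (Or.inl ⟨h, h2⟩)
    · exact Or.inr (Or.inr (Or.inr ⟨h.symm, h2⟩))
  · exact Or.inr (Or.inr (Or.inl h))

lemma lexlt_of_TvP_lt {i i' : Fin t} {j j' : ℕ} (hj1 : 1 ≤ j) (hj2' : j' ≤ n i')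
    (h : TvP n i j < TvP n i' j') : lexlt i j i' j' := by
  rcases lexlt_trichotomy i i' j j' with hl | ⟨rfl, rfl⟩ | hl
  · exact hl
  · exact absurd h (lt_irrefl _)
  · exact absurd (TvP_lt_of_lexlt hj2' hj1 hl) (not_lt.2 (le_of_lt h))

lemma TvP_inj {i i' : Fin t} {j j' : ℕ} (hj1 : 1 ≤ j) (hj2 : j ≤ n i)
    (hj1' : 1 ≤ j') (hj2' : j' ≤ n i') (h : TvP n i j = TvP n i' j') : i = i' ∧ j = j' := by
  rcases lexlt_trichotomy i i' j j' with hl | he | hl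
  · exact absurd (TvP_lt_of_lexlt hj2 hj1' hl) (h ▸ lt_irrefl _)
  · exact he
  · exact absurd (TvP_lt_of_lexlt hj2' hj1 hl) (h ▸ lt_irrefl _)

lemma blockR_le_blockL_of_lexlt {i i' : Fin t} {j j' : ℕ} (hj2 : j ≤ n i) (hj1' : 1 ≤ j')
    (h : lexlt i j i' j') : blockR m n i j ≤ blockL m n i' j' := by
  rcases h with h | ⟨rfl, h⟩
  · have h1 : j * m i ≤ n i * m i := Nat.mul_le_mul_right _ hj2
    have h2 : n i * m i = m i * n i := Nat.mul_comm _ _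
    have h3 : ∑ l ∈ Finset.Iic i, m l * n l ≤ ∑ l ∈ Finset.Iio i', m l * n l :=
      Finset.sum_le_sum_of_subset (Iic_subset_Iio h)
    have h4 := sum_Iic_eq i (fun l => m l * n l)
    unfold blockR blockL
    omega
  · have h1 : j * m i ≤ (j' - 1) * m i := Nat.mul_le_mul_right _ (by omega)
    unfold blockR blockL
    omega

end Part2

section Part2b

lemma gw_block (hm_mono : ∀ i j : Fin t, i ≤ j → m j ≤ m i) (hmn : ∀ i, n i ≤ m i)
    {i : Fin t} {j : ℕ} (hj1 : 1 ≤ j) (hj2 : j ≤ n i)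
    {r : ℕ} (hr1 : blockL m n i j < r) (hr2 : r ≤ blockR m n i j) :
    gw (⊤ : Submodule F (∀ i : Fin t, Matrix (Fin (m i)) (Fin (n i)) F)) r = TvP n i j := by
  have hbr := blockR_sub_blockL (m := m) (n := n) (i := i) (j := j) hj1
  have hL : blockL m n i j = ∑ l ∈ Finset.Iio i, m l * n l + (j - 1) * m i := rfl
  obtain ⟨s, hs1, hs2, rfl⟩ : ∃ s, 1 ≤ s ∧ s ≤ m i ∧
      r = ∑ l ∈ Finset.Iio i, m l * n l + (j - 1) * m i + s := by
    exact ⟨r - blockL m n i j, by omega, by omega, by omega⟩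
  exact gw_top_eq hm_mono hmn i j _ hj1 hj2 hs1 hs2

lemma card_filter_Ico (N a b : ℕ) (hbN : b ≤ N) :
    (Finset.univ.filter (fun p : Fin N => a ≤ (p : ℕ) ∧ (p : ℕ) < b)).card = b - a := by
  rcases Nat.eq_zero_or_pos N with hN | hN
  · subst hN
    rw [Finset.univ_eq_empty, Finset.filter_empty, Finset.card_empty]
    omega
  rw [← Nat.card_Ico a b]
  refine Finset.card_nbij' (fun p => (p : ℕ)) (fun x => ⟨x % N, Nat.mod_lt _ hN⟩)
    ?_ ?_ ?_ ?_
  · intro p hp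
    rw [Finset.mem_coe, Finset.mem_filter] at hp
    rw [Finset.mem_coe, Finset.mem_Ico]
    exact hp.2
  · intro x hx
    rw [Finset.mem_coe, Finset.mem_Ico] at hx
    have hxN : x < N := lt_of_lt_of_le hx.2 hbN
    simp only [Finset.mem_coe, Finset.mem_filter, Finset.mem_univ, true_and, Nat.mod_eq_of_lt hxN]
    exact hx
  · intro p hp
    exact Fin.ext (by simp [Nat.mod_eq_of_lt p.2])
  · intro x hx
    rw [Finset.mem_coe, Finset.mem_Ico] at hx
    have hxN : x < N := lt_of_lt_of_le hx.2 hbN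
    simp [Nat.mod_eq_of_lt hxN]

end Part2b

section Part2c

lemma part2 (hm_mono : ∀ i j : Fin t, i ≤ j → m j ≤ m i)
    (hn_pos : ∀ i, 0 < n i) (hmn : ∀ i, n i ≤ m i) {N : ℕ}
    (hN : N = ∑ l, m l * n l) (k : ℕ) (d : Fin k → ℕ) :
    IsSubseq d (fun p : Fin N =>
      gw (⊤ : Submodule F (∀ i : Fin t, Matrix (Fin (m i)) (Fin (n i)) F)) ((p : ℕ) + 1)) ↔
      (Monotone d ∧ (∀ r, 1 ≤ d r ∧ d r ≤ ∑ i, n i) ∧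
        ∀ i : Fin t, ∀ j : ℕ, 1 ≤ j → j ≤ n i →
          (Finset.univ.filter (fun r : Fin k => d r = ∑ l ∈ Finset.Iio i, n l + j)).card
            ≤ m i) := by
  classical
  have hdec : ∀ p : Fin N, ∃ ij : Fin t × ℕ, (1 ≤ ij.2 ∧ ij.2 ≤ n ij.1) ∧
      blockL m n ij.1 ij.2 < (p : ℕ) + 1 ∧ (p : ℕ) + 1 ≤ blockR m n ij.1 ij.2 := by
    intro p
    have hp2 : (p : ℕ) < N := p.2
    obtain ⟨i, j, h1, h2, h3, h4⟩ := decomp hn_pos hmn ((p : ℕ) + 1) (by omega) (by omega)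
    exact ⟨(i, j), ⟨h1, h2⟩, h3, h4⟩
  choose b hb1 hbL hbR using hdec
  set e : Fin N → ℕ := fun p =>
    gw (⊤ : Submodule F (∀ i : Fin t, Matrix (Fin (m i)) (Fin (n i)) F)) ((p : ℕ) + 1)
    with he_def
  have he : ∀ p : Fin N, e p = TvP n (b p).1 (b p).2 := fun p =>
    gw_block hm_mono hmn (hb1 p).1 (hb1 p).2 (hbL p) (hbR p)
  have key : ∀ (p : Fin N) (i : Fin t) (j : ℕ), 1 ≤ j → j ≤ n i →
      (e p = TvP n i j ↔ blockL m n i j ≤ (p : ℕ) ∧ (p : ℕ) < blockR m n i j) := by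
    intro p i j hj1 hj2
    constructor
    · intro hpv
      rw [he p] at hpv
      obtain ⟨hi, hj⟩ := TvP_inj (hb1 p).1 (hb1 p).2 hj1 hj2 hpv
      have h3 := hbL p
      have h4 := hbR p
      rw [hi, hj] at h3 h4
      omega
    · rintro ⟨h1, h2⟩
      rcases lexlt_trichotomy (b p).1 i (b p).2 j with hl | ⟨hi, hj⟩ | hl
      · exfalso
        have := blockR_le_blockL_of_lexlt (m := m) (hb1 p).2 hj1 hl
        have h3 := hbR p
        omega
      · rw [he p, hi, hj]
      · exfalso
        have := blockR_le_blockL_of_lexlt (m := m) hj2 (hb1 p).1 hl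
        have h3 := hbL p
        have h4 := blockL_le_blockR (m := m) (n := n) (i := i) (j := j)
        omega
  have hmono_e : ∀ p q : Fin N, (p : ℕ) ≤ (q : ℕ) → e p ≤ e q := by
    intro p q hpq
    by_contra hcon
    push_neg at hcon
    rw [he p, he q] at hcon
    have hl := lexlt_of_TvP_lt (hb1 q).1 (hb1 p).2 hcon
    have := blockR_le_blockL_of_lexlt (m := m) (hb1 q).2 (hb1 p).1 hl
    have h1 := hbR q
    have h2 := hbL p
    omega
  have hfiber : ∀ (i : Fin t) (j : ℕ), 1 ≤ j → j ≤ n i →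
      (Finset.univ.filter (fun p : Fin N => e p = TvP n i j)).card = m i := by
    intro i j hj1 hj2
    have hcongr : Finset.univ.filter (fun p : Fin N => e p = TvP n i j)
        = Finset.univ.filter (fun p : Fin N =>
            blockL m n i j ≤ (p : ℕ) ∧ (p : ℕ) < blockR m n i j) :=
      Finset.filter_congr fun p _ => key p i j hj1 hj2
    rw [hcongr, card_filter_Ico N _ _ (by rw [hN]; exact blockR_le_total hj2),
      blockR_sub_blockL hj1]
    omega
  constructor
  · rintro ⟨φ, hφm, hφe⟩
    refine ⟨?_, ?_, ?_⟩
    · intro r r' hrr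
      rw [hφe r, hφe r']
      exact hmono_e _ _ (Fin.le_def.1 (hφm.monotone hrr))
    · intro r
      rw [hφe r]
      have h := he (φ r)
      have h1 := (hb1 (φ r)).1
      have h2 := TvP_le_total (hb1 (φ r)).2
      constructor
      · rw [h]
        unfold TvP
        omega
      · rw [h]
        exact h2
    · intro i j hj1 hj2
      have hsub : ∀ r ∈ Finset.univ.filter
          (fun r : Fin k => d r = ∑ l ∈ Finset.Iio i, n l + j),
          φ r ∈ Finset.univ.filter (fun p : Fin N => e p = TvP n i j) := by
        intro r hr
        rw [Finset.mem_filter] at hr ⊢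
        refine ⟨Finset.mem_univ _, ?_⟩
        rw [← hφe r]
        exact hr.2
      have := Finset.card_le_card_of_injOn φ hsub (hφm.injective.injOn)
      rw [hfiber i j hj1 hj2] at this
      exact this
  · rintro ⟨hmono, hbound, hcount⟩
    have hval : ∀ r : Fin k, ∃ ij : Fin t × ℕ,
        (1 ≤ ij.2 ∧ ij.2 ≤ n ij.1) ∧ d r = TvP n ij.1 ij.2 := by
      intro r
      obtain ⟨i, h1, h2⟩ := find_index n (d r) (hbound r).1 (hbound r).2
      refine ⟨(i, d r - ∑ l ∈ Finset.Iio i, n l), ⟨?_, ?_⟩, ?_⟩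
      · show 1 ≤ d r - ∑ l ∈ Finset.Iio i, n l
        omega
      · show d r - ∑ l ∈ Finset.Iio i, n l ≤ n i
        omega
      · show d r = TvP n i (d r - ∑ l ∈ Finset.Iio i, n l)
        unfold TvP
        omega
    choose v hv1 hvd using hval
    set cnt : Fin k → ℕ := fun r =>
      (Finset.univ.filter (fun r' : Fin k => r' < r ∧ d r' = d r)).card with hcnt_def
    have hcnt : ∀ r, cnt r < m (v r).1 := by
      intro r
      have hsub : Finset.univ.filter (fun r' : Fin k => r' < r ∧ d r' = d r)
          ⊆ Finset.univ.filter
            (fun r' : Fin k => d r' = ∑ l ∈ Finset.Iio (v r).1, n l + (v r).2) := by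
        intro r' hr'
        rw [Finset.mem_filter] at hr' ⊢
        refine ⟨Finset.mem_univ _, ?_⟩
        rw [hr'.2.2, hvd r]
        rfl
      have hne : r ∈ Finset.univ.filter
          (fun r' : Fin k => d r' = ∑ l ∈ Finset.Iio (v r).1, n l + (v r).2) := by
        rw [Finset.mem_filter]
        exact ⟨Finset.mem_univ _, by rw [hvd r]; rfl⟩
      have hno : r ∉ Finset.univ.filter (fun r' : Fin k => r' < r ∧ d r' = d r) := by
        rw [Finset.mem_filter]
        exact fun h => absurd h.2.1 (lt_irrefl _)
      calc cnt r < (Finset.univ.filter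
          (fun r' : Fin k => d r' = ∑ l ∈ Finset.Iio (v r).1, n l + (v r).2)).card :=
        Finset.card_lt_card ⟨hsub, fun hs => hno (hs hne)⟩
      _ ≤ m (v r).1 := hcount (v r).1 (v r).2 (hv1 r).1 (hv1 r).2
    have hlt : ∀ r : Fin k, blockL m n (v r).1 (v r).2 + cnt r < N := by
      intro r
      have h1 := blockR_sub_blockL (m := m) (n := n) (i := (v r).1) (j := (v r).2) (hv1 r).1
      have h2 := blockR_le_total (m := m) (n := n) (i := (v r).1) (j := (v r).2) (hv1 r).2
      have h3 := hcnt r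
      omega
    refine ⟨fun r => ⟨blockL m n (v r).1 (v r).2 + cnt r, hlt r⟩, ?_, ?_⟩
    · intro r r' hrr
      rw [Fin.mk_lt_mk]
      rcases eq_or_ne (d r) (d r') with hd | hd
      · have hveq : (v r) = (v r') := by
          have h := hvd r
          rw [hd, hvd r'] at h
          obtain ⟨h1, h2⟩ := TvP_inj (hv1 r').1 (hv1 r').2 (hv1 r).1 (hv1 r).2 h
          exact (Prod.ext h1 h2).symm
        have hcl : cnt r < cnt r' := by
          apply Finset.card_lt_card
          constructor
          · intro r'' hr''
            rw [Finset.mem_filter] at hr'' ⊢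
            exact ⟨Finset.mem_univ _, hr''.2.1.trans hrr, by rw [hr''.2.2, hd]⟩
          · intro hsub
            have hrm : r ∈ Finset.univ.filter
                (fun r'' : Fin k => r'' < r' ∧ d r'' = d r') := by
              rw [Finset.mem_filter]
              exact ⟨Finset.mem_univ _, hrr, hd⟩
            have hmem := hsub hrm
            rw [Finset.mem_filter] at hmem
            exact absurd hmem.2.1 (lt_irrefl _)
        rw [hveq]
        omega
      · have hdlt : d r < d r' := lt_of_le_of_ne (hmono (le_of_lt hrr)) hd
        rw [hvd r, hvd r'] at hdlt
        have hl := lexlt_of_TvP_lt (hv1 r).1 (hv1 r').2 hdlt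
        have hRL := blockR_le_blockL_of_lexlt (m := m) (hv1 r).2 (hv1 r').1 hl
        have h1 := blockR_sub_blockL (m := m) (n := n) (i := (v r).1) (j := (v r).2) (hv1 r).1
        have h3 := hcnt r
        omega
    · intro r
      have heq := (key ⟨blockL m n (v r).1 (v r).2 + cnt r, hlt r⟩ (v r).1 (v r).2
          (hv1 r).1 (hv1 r).2).2 ⟨by simp, by
        simp only [Fin.val_mk]
        have h1 := blockR_sub_blockL (m := m) (n := n) (i := (v r).1) (j := (v r).2) (hv1 r).1
        have h3 := hcnt r
        omega⟩
      rw [hvd r]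
      exact heq.symm

end Part2c

/-- The generalized sum-rank weights of the full ambient space `𝕄`: for `i ∈ [t]`,
`j ∈ [n i]`, `s ∈ [m i]`, the `(∑_{l<i} m l * n l + (j-1) * m i + s)`-th generalized weight
of `𝕄` equals `∑_{l<i} n l + j`. Consequently, a sequence is a subsequence of the sequence of
generalized weights of `𝕄` iff it is non-decreasing with values in `[n_1 + ⋯ + n_t]` and each
value `∑_{l<i} n l + j` appears at most `m i` times. -/
theorem gw_of_ambient_space (ht : 0 < t)
    (hm_mono : ∀ i j : Fin t, i ≤ j → m j ≤ m i)
    (hn_pos : ∀ i, 0 < n i) (hmn : ∀ i, n i ≤ m i) :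
    (∀ i : Fin t, ∀ j s : ℕ, 1 ≤ j → j ≤ n i → 1 ≤ s → s ≤ m i →
      gw (⊤ : Submodule F (∀ i : Fin t, Matrix (Fin (m i)) (Fin (n i)) F))
        (∑ l ∈ Finset.Iio i, m l * n l + (j - 1) * m i + s) =
        ∑ l ∈ Finset.Iio i, n l + j) ∧
    (∀ k : ℕ, ∀ d : Fin k → ℕ,
      IsSubseq d (fun r : Fin (Module.finrank F (∀ i : Fin t, Matrix (Fin (m i)) (Fin (n i)) F)) =>
          gw (⊤ : Submodule F (∀ i : Fin t, Matrix (Fin (m i)) (Fin (n i)) F)) (r.1 + 1)) ↔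
        (Monotone d ∧ (∀ r, 1 ≤ d r ∧ d r ≤ ∑ i, n i) ∧
          ∀ i : Fin t, ∀ j : ℕ, 1 ≤ j → j ≤ n i →
            (Finset.univ.filter (fun r : Fin k => d r = ∑ l ∈ Finset.Iio i, n l + j)).card
              ≤ m i)) := by
  refine ⟨fun i j s hj1 hj2 hs1 hs2 => gw_top_eq hm_mono hmn i j s hj1 hj2 hs1 hs2,
    fun k d => part2 hm_mono hn_pos hmn finrank_ambient_eq k d⟩
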